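/- Let f : ℝⁿ → ℝᵐ satisfy the dot-product order preservation property (⟨x, u⟩ ≤ ⟨x, v⟩ implies ⟨f(x), f(u)⟩ ≤ ⟨f(x), f(v)⟩ for all x, u, v ∈ ℝⁿ). If u, v ∈ ℝⁿ are orthogonal, then ⟨f(u), f(v)⟩ = ‖f(0)‖². -/
import Mathlib

open RealInnerProductSpace

theorem stmt_4 {n m : ℕ} (f : EuclideanSpace ℝ (Fin n) → EuclideanSpace ℝ (Fin m))
    (hord : ∀ x u v, ⟪x, u⟫ ≤ ⟪x, v⟫ → ⟪f x, f u⟫ ≤ ⟪f x, f v⟫)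
    (u v : EuclideanSpace ℝ (Fin n)) (huv : ⟪u, v⟫ = 0) :
    ⟪f u, f v⟫ = ‖f 0‖ ^ 2 := by
  have h1 : ⟪f u, f v⟫ = ⟪f u, f 0⟫ :=
    le_antisymm (hord u v 0 (by simp [huv])) (hord u 0 v (by simp [huv]))
  have h2 : ⟪f 0, f u⟫ = ⟪f 0, f 0⟫ :=
    le_antisymm (hord 0 u 0 (by simp)) (hord 0 0 u (by simp))
  rw [h1, real_inner_comm, h2, real_inner_self_eq_norm_sq]
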